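/- A measure ν on Y is s-finite if and only if there exists a σ-finite measure μ on Y and a measurable function f : Y → {1,∞} such that ν(A) = ∫_A f dμ for all measurable A. Moreover f is unique ν-almost everywhere, and μ(A) is uniquely determined whenever f takes only the value 1 on A. -/

import Mathlib

open MeasureTheory Set

private lemma aux_null {Y : Type*} [MeasurableSpace Y] {μ μ' : Measure Y} {f f' : Y → ENNReal}
    [SigmaFinite μ']
    {T : Set Y} (hT : MeasurableSet T) (hfT : ∀ y ∈ T, f y = ⊤) (hf'T : ∀ y ∈ T, f' y = 1)
    (h : μ.withDensity f = μ'.withDensity f') : μ.withDensity f T = 0 := by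
  have key : ∀ A : Set Y, MeasurableSet A → A ⊆ T → μ.withDensity f A = ⊤ * μ A := by
    intro A hA hAT
    rw [withDensity_apply _ hA,
      setLIntegral_congr_fun hA (fun y hy => hfT y (hAT hy)),
      setLIntegral_const]
  have key' : ∀ A : Set Y, MeasurableSet A → A ⊆ T → μ.withDensity f A = μ' A := by
    intro A hA hAT
    rw [h, withDensity_apply _ hA,
      setLIntegral_congr_fun hA (fun y hy => hf'T y (hAT hy)),
      setLIntegral_one]
  have hsub : T ⊆ ⋃ n, T ∩ spanningSets μ' n := by
    rw [← inter_iUnion, iUnion_spanningSets, inter_univ]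
  refine le_antisymm ?_ zero_le
  calc μ.withDensity f T ≤ ∑' n, μ.withDensity f (T ∩ spanningSets μ' n) :=
        (measure_mono hsub).trans (measure_iUnion_le _)
    _ = 0 := by
      rw [ENNReal.tsum_eq_zero]
      intro n
      have hm : MeasurableSet (T ∩ spanningSets μ' n) := hT.inter (measurableSet_spanningSets μ' n)
      have h1 := key _ hm inter_subset_left
      have h2 := key' _ hm inter_subset_left
      have hlt : μ.withDensity f (T ∩ spanningSets μ' n) < ⊤ :=
        h2 ▸ ((measure_mono inter_subset_right).trans_lt (measure_spanningSets_lt_top μ' n))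
      by_contra hne
      have h0 : μ (T ∩ spanningSets μ' n) ≠ 0 := by
        intro h0; exact hne (by simp [h1, h0])
      rw [h1, ENNReal.top_mul h0] at hlt
      exact lt_irrefl _ hlt

/-- A measure `ν` is s-finite iff `ν = μ.withDensity f` for a σ-finite `μ` and a measurable
`f : Y → {1, ∞}`.  Moreover `f` is unique `ν`-a.e., and `μ A` is uniquely determined on
measurable sets `A` on which `f` only takes the value `1`. -/
theorem sfinite_iff_sigmaFinite_withDensity_one_top {Y : Type*} [MeasurableSpace Y]
    (ν : Measure Y) :
    (SFinite ν ↔ ∃ (μ : Measure Y) (f : Y → ENNReal), SigmaFinite μ ∧ Measurable f ∧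
      (∀ y, f y = 1 ∨ f y = ⊤) ∧ ν = μ.withDensity f) ∧
    (∀ (μ μ' : Measure Y) (f f' : Y → ENNReal), SigmaFinite μ → SigmaFinite μ' →
      Measurable f → Measurable f' → (∀ y, f y = 1 ∨ f y = ⊤) → (∀ y, f' y = 1 ∨ f' y = ⊤) →
      ν = μ.withDensity f → ν = μ'.withDensity f' →
      (f =ᵐ[ν] f') ∧
      (∀ A, MeasurableSet A → (∀ y ∈ A, f y = 1) → (∀ y ∈ A, f' y = 1) → μ A = μ' A)) := by
  constructor
  · constructor
    · intro hν
      set τ := ν.toFinite with hτ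
      set g := ν.rnDeriv τ with hg
      have hgm : Measurable g := ν.measurable_rnDeriv τ
      have hSm : MeasurableSet {y | g y = ⊤} := hgm (measurableSet_singleton ⊤)
      have hhm : Measurable (fun y => if g y = ⊤ then 1 else g y) :=
        Measurable.ite hSm measurable_const hgm
      have hfm : Measurable (fun y => if g y = ⊤ then (⊤ : ENNReal) else 1) :=
        Measurable.ite hSm measurable_const measurable_const
      refine ⟨τ.withDensity (fun y => if g y = ⊤ then 1 else g y),
        fun y => if g y = ⊤ then ⊤ else 1, ?_, hfm, ?_, ?_⟩
      · refine SigmaFinite.withDensity_of_ne_top' fun y => ?_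
        split_ifs with hy
        · exact ENNReal.one_ne_top
        · exact hy
      · intro y
        by_cases hy : g y = ⊤ <;> simp [hy]
      · rw [← withDensity_mul _ hhm hfm]
        have : (fun y => if g y = ⊤ then 1 else g y) * (fun y => if g y = ⊤ then (⊤ : ENNReal) else 1)
            = g := by
          funext y
          simp only [Pi.mul_apply]
          split_ifs with hy
          · simp [hy]
          · simp
        rw [this]
        exact (Measure.withDensity_rnDeriv_eq ν τ (absolutelyContinuous_toFinite ν)).symm
    · rintro ⟨μ, f, hσ, hfm, hf, rfl⟩
      infer_instance
  · intro μ μ' f f' hσ hσ' hfm hf'm hf hf' hν hν'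
    have hSm : MeasurableSet {y | f y = ⊤} := hfm (measurableSet_singleton ⊤)
    have hS'm : MeasurableSet {y | f' y = ⊤} := hf'm (measurableSet_singleton ⊤)
    have h1of : ∀ y, f y ≠ ⊤ → f y = 1 := fun y hy => (hf y).resolve_right hy
    have h1of' : ∀ y, f' y ≠ ⊤ → f' y = 1 := fun y hy => (hf' y).resolve_right hy
    have hd1 : ν ({y | f y = ⊤} \ {y | f' y = ⊤}) = 0 := by
      rw [hν]
      exact aux_null (hSm.diff hS'm) (fun y hy => hy.1)
        (fun y hy => h1of' y hy.2) (hν ▸ hν')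
    have hd2 : ν ({y | f' y = ⊤} \ {y | f y = ⊤}) = 0 := by
      rw [hν']
      exact aux_null (hS'm.diff hSm) (fun y hy => hy.1)
        (fun y hy => h1of y hy.2) (hν' ▸ hν)
    constructor
    · have hnull : ν (({y | f y = ⊤} \ {y | f' y = ⊤}) ∪ ({y | f' y = ⊤} \ {y | f y = ⊤})) = 0 :=
        measure_union_null hd1 hd2
      refine measure_mono_null (fun y hy => ?_) hnull
      simp only [Set.mem_union, Set.mem_diff, Set.mem_setOf_eq]
      by_contra hmem
      push_neg at hmem
      apply hy
      show f y = f' y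
      by_cases h1 : f y = ⊤
      · rw [h1, hmem.1 h1]
      · rw [h1of y h1, h1of' y ?_]
        intro h2
        exact h1 (hmem.2 h2)
    · intro A hA hfA hf'A
      have e1 : μ A = ν A := by
        rw [hν, withDensity_apply _ hA,
          setLIntegral_congr_fun hA hfA, setLIntegral_one]
      have e2 : μ' A = ν A := by
        rw [hν', withDensity_apply _ hA,
          setLIntegral_congr_fun hA hf'A, setLIntegral_one]
      rw [e1, e2]
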